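/- Let D_7 = ⟨a,b | a^7 = b^2 = 1, bab = a^{-1}⟩ be the dihedral group of order 14 and let S = {ba, ba², ba⁴}. Then the Cayley graph X(D_7,S) is connected but not integral, even though the multiset S² = 3*{1} ∪ [a] (each nonidentity power of a appearing once) has multiplicity function constant on each atom of ⟨a⟩. -/

import Mathlib

open DihedralGroup Polynomial

/-- The degree-2 irreducible character `χ_h` of the dihedral group `D_n`:
`χ_h(a^k) = 2cos(2khπ/n)` and `χ_h(ba^k) = 0`. -/
noncomputable def chi (n h : ℕ) : DihedralGroup n → ℝ
  | .r k => 2 * Real.cos (2 * k.val * h * Real.pi / n)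
  | .sr _ => 0

/-- `χ(A) = Σ_{x ∈ A} χ(x)`. -/
noncomputable def chiSum (n h : ℕ) (A : Set (DihedralGroup n)) : ℝ :=
  ∑ᶠ x ∈ A, chi n h x

/-- `χ(A²) = Σ_{x,y ∈ A} χ(xy)`, over ordered pairs. -/
noncomputable def chiSum2 (n h : ℕ) (A : Set (DihedralGroup n)) : ℝ :=
  ∑ᶠ x ∈ A, ∑ᶠ y ∈ A, chi n h (x * y)

/-- The Cayley graph `X(G,S)`: vertices `G`, with `x,y` adjacent iff `x⁻¹y ∈ S`
(for `S` inverse-closed and not containing `1`). -/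
def cayleyGraph {G : Type*} [Group G] (S : Set G) : SimpleGraph G :=
  SimpleGraph.fromRel (fun x y => x⁻¹ * y ∈ S)

open scoped Classical in
/-- The adjacency matrix of a graph, over `ℂ`. -/
noncomputable def adjMat {V : Type*} [Fintype V] (G : SimpleGraph V) : Matrix V V ℂ :=
  Matrix.of fun x y => if G.Adj x y then 1 else 0

/-- A graph is integral if every eigenvalue of its adjacency matrix is an integer. -/
def IsIntegralGraph {V : Type*} [Fintype V] [DecidableEq V] (G : SimpleGraph V) : Prop :=
  ∀ μ ∈ spectrum ℂ (adjMat G), ∃ z : ℤ, μ = (z : ℂ)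

/-- The cyclic subgroup `⟨a⟩` of `D_n`, as a set. -/
def rSet (n : ℕ) : Set (DihedralGroup n) := {x | ∃ k, x = .r k}

/-- The coset `b⟨a⟩` of `D_n`, as a set. -/
def srSet (n : ℕ) : Set (DihedralGroup n) := {x | ∃ k, x = .sr k}

/-- `S` belongs to the Boolean algebra `B(⟨a⟩)`, i.e. `S ⊆ ⟨a⟩` is a union of atoms
`[a^l] = {a^k : gcd(k,n) = gcd(l,n)}`: membership in `S` is constant on each atom. -/
def InBooleanAlgebra (n : ℕ) (S : Set (DihedralGroup n)) : Prop :=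
  S ⊆ rSet n ∧ ∀ k l : ZMod n, Nat.gcd k.val n = Nat.gcd l.val n →
    (DihedralGroup.r k ∈ S ↔ DihedralGroup.r l ∈ S)

/-- The multiplicity of `x` in the multiset `S² = {s₁s₂ : (s₁,s₂) ∈ S × S}` (ordered pairs). -/
noncomputable def sqMult {n : ℕ} (S : Set (DihedralGroup n)) (x : DihedralGroup n) : ℕ :=
  Nat.card {p : DihedralGroup n × DihedralGroup n // p.1 ∈ S ∧ p.2 ∈ S ∧ p.1 * p.2 = x}

/-- The irreducible character `φ_h` of the cyclic group `⟨a⟩` of order `n`: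
`φ_h(a^k) = e^{2πihk/n}`. -/
noncomputable def phi (n h : ℕ) (k : ZMod n) : ℂ :=
  Complex.exp (2 * Real.pi * Complex.I * h * k.val / n)


/-! ### Auxiliary material for the proof -/

noncomputable def zeta : ℂ := Complex.exp (2 * Real.pi * Complex.I / 7)

lemma zeta_pow_seven : zeta ^ 7 = 1 := by
  rw [zeta, ← Complex.exp_nat_mul]
  rw [show ((7:ℕ) : ℂ) * (2 * Real.pi * Complex.I / 7) = 2 * Real.pi * Complex.I by
    push_cast; ring]
  exact Complex.exp_two_pi_mul_I

lemma zeta_ne_one : zeta ≠ 1 := by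
  rw [zeta]
  intro h
  rw [Complex.exp_eq_one_iff] at h
  obtain ⟨n, hn⟩ := h
  have hpi : (Real.pi : ℂ) ≠ 0 := by exact_mod_cast Real.pi_ne_zero
  have hI := Complex.I_ne_zero
  have : (7 : ℂ) * n = 1 := by
    field_simp at hn
    have h2 : (2 * (Real.pi:ℂ) * Complex.I) ≠ 0 := by
      simp [hpi, Complex.I_ne_zero]
    simpa using mul_right_cancel₀ h2
      (show ((7:ℂ) * n) * (2 * (Real.pi:ℂ) * Complex.I)
          = 1 * (2 * (Real.pi:ℂ) * Complex.I) by linear_combination (-(2 * (Real.pi:ℂ) * Complex.I)) * hn)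
  have : (7 * n : ℤ) = 1 := by exact_mod_cast this
  omega

lemma zeta_sum : 1 + zeta + zeta^2 + zeta^3 + zeta^4 + zeta^5 + zeta^6 = 0 := by
  have h := geom_sum_eq zeta_ne_one 7
  rw [zeta_pow_seven, sub_self] at h
  have h2 : ∑ i ∈ Finset.range 7, zeta ^ i = 0 := by
    rw [h]; simp
  simpa [Finset.sum_range_succ] using h2

lemma zeta_pow_mod (m : ℕ) : zeta ^ (m % 7) = zeta ^ m := by
  conv_rhs => rw [← Nat.div_add_mod m 7, pow_add, pow_mul, zeta_pow_seven, one_pow, one_mul]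

noncomputable def wf (k : ZMod 7) : ℂ := zeta ^ k.val

lemma wf_add (a b : ZMod 7) : wf (a + b) = wf a * wf b := by
  rw [wf, wf, wf, ZMod.val_add, zeta_pow_mod, pow_add]

noncomputable def evec : DihedralGroup 7 → ℂ
  | .r k => Real.sqrt 2 * wf k
  | .sr k => (zeta + zeta^2 + zeta^4) * wf (-k)

lemma hAdj (S : Set (DihedralGroup 7))
    (hS : S = {DihedralGroup.sr 1, DihedralGroup.sr 2, DihedralGroup.sr 4})
    (x y : DihedralGroup 7) :
    (cayleyGraph S).Adj x y ↔ (y = x * .sr 1 ∨ y = x * .sr 2 ∨ y = x * .sr 4) := by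
  subst hS
  rw [cayleyGraph, SimpleGraph.fromRel_adj]
  have hmem : ∀ u v : DihedralGroup 7,
      (u⁻¹ * v ∈ ({DihedralGroup.sr 1, DihedralGroup.sr 2, DihedralGroup.sr 4} :
        Set (DihedralGroup 7)))
      ↔ (v = u * .sr 1 ∨ v = u * .sr 2 ∨ v = u * .sr 4) := by
    intro u v
    simp only [Set.mem_insert_iff, Set.mem_singleton_iff, inv_mul_eq_iff_eq_mul]
  have hsymm : ∀ u v : DihedralGroup 7, (v = u * .sr 1 ∨ v = u * .sr 2 ∨ v = u * .sr 4) →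
      (u = v * .sr 1 ∨ u = v * .sr 2 ∨ u = v * .sr 4) := by
    rintro u v (h | h | h)
    · left; rw [h, mul_assoc, sr_mul_sr, sub_self]; simp
    · right; left; rw [h, mul_assoc, sr_mul_sr, sub_self]; simp
    · right; right; rw [h, mul_assoc, sr_mul_sr, sub_self]; simp
  constructor
  · rintro ⟨hne, h | h⟩
    · exact (hmem x y).1 h
    · exact hsymm y x ((hmem y x).1 h)
  · intro h
    refine ⟨?_, Or.inl ((hmem x y).2 h)⟩
    rintro rfl
    rcases h with h | h | h <;>
    · nth_rewrite 1 [(show x = x * 1 by rw [mul_one])] at h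
      have := mul_left_cancel h
      exact absurd this (by decide)

lemma evec_mul (S : Set (DihedralGroup 7))
    (hS : S = {DihedralGroup.sr 1, DihedralGroup.sr 2, DihedralGroup.sr 4}) :
    (adjMat (cayleyGraph S)).mulVec evec = (Real.sqrt 2 : ℂ) • evec := by
  classical
  funext x
  have hne12 : x * DihedralGroup.sr 1 ≠ x * DihedralGroup.sr 2 := by
    intro h; exact absurd (mul_left_cancel h) (by decide)
  have hne14 : x * DihedralGroup.sr 1 ≠ x * DihedralGroup.sr 4 := by
    intro h; exact absurd (mul_left_cancel h) (by decide)
  have hne24 : x * DihedralGroup.sr 2 ≠ x * DihedralGroup.sr 4 := by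
    intro h; exact absurd (mul_left_cancel h) (by decide)
  have step1 : (adjMat (cayleyGraph S)).mulVec evec x
      = evec (x * .sr 1) + evec (x * .sr 2) + evec (x * .sr 4) := by
    rw [Matrix.mulVec]
    show (∑ y, adjMat (cayleyGraph S) x y * evec y) = _
    have : ∀ y, adjMat (cayleyGraph S) x y * evec y
        = (if y = x * .sr 1 then evec y else 0) + (if y = x * .sr 2 then evec y else 0)
          + (if y = x * .sr 4 then evec y else 0) := by
      intro y
      rw [adjMat, Matrix.of_apply, if_congr (hAdj S hS x y) rfl rfl]
      by_cases h1 : y = x * .sr 1 <;> by_cases h2 : y = x * .sr 2 <;>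
        by_cases h3 : y = x * .sr 4 <;> simp_all
    rw [Finset.sum_congr rfl (fun y _ => this y), Finset.sum_add_distrib,
      Finset.sum_add_distrib, Finset.sum_ite_eq' _ _ evec, Finset.sum_ite_eq' _ _ evec,
      Finset.sum_ite_eq' _ _ evec]
    simp
  rw [step1]
  have key2 : (zeta + zeta^2 + zeta^4) * (zeta^6 + zeta^5 + zeta^3) = 2 := by
    linear_combination (zeta^3 + zeta^2 + zeta + 3) * zeta_pow_seven + zeta_sum
  have hs2 : (Real.sqrt 2 : ℂ) * (Real.sqrt 2 : ℂ) = 2 := by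
    rw [← Complex.ofReal_mul, Real.mul_self_sqrt (by norm_num : (0:ℝ) ≤ 2)]
    norm_num
  rcases x with k | k
  · simp only [r_mul_sr, evec, Pi.smul_apply, smul_eq_mul]
    have e1 : wf (-(1 - k)) = wf k * zeta ^ 6 := by
      rw [show -(1 - k) = k + (-1) by ring, wf_add]; rfl
    have e2 : wf (-(2 - k)) = wf k * zeta ^ 5 := by
      rw [show -(2 - k) = k + (-2) by ring, wf_add]; rfl
    have e3 : wf (-(4 - k)) = wf k * zeta ^ 3 := by
      rw [show -(4 - k) = k + (-4) by ring, wf_add]; rfl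
    rw [e1, e2, e3]
    linear_combination (wf k) * key2 - (wf k) * hs2
  · simp only [sr_mul_sr, evec, Pi.smul_apply, smul_eq_mul]
    have e1 : wf (1 - k) = zeta * wf (-k) := by
      rw [show (1 - k : ZMod 7) = 1 + (-k) by ring, wf_add, wf,
        show ((1 : ZMod 7)).val = 1 by decide, pow_one]
    have e2 : wf (2 - k) = zeta ^ 2 * wf (-k) := by
      rw [show (2 - k : ZMod 7) = 2 + (-k) by ring, wf_add, wf,
        show ((2 : ZMod 7)).val = 2 by decide]
    have e3 : wf (4 - k) = zeta ^ 4 * wf (-k) := by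
      rw [show (4 - k : ZMod 7) = 4 + (-k) by ring, wf_add, wf,
        show ((4 : ZMod 7)).val = 4 by decide]
    rw [e1, e2, e3]
    ring

lemma sqrt2_mem (S : Set (DihedralGroup 7))
    (hS : S = {DihedralGroup.sr 1, DihedralGroup.sr 2, DihedralGroup.sr 4}) :
    ((Real.sqrt 2 : ℝ) : ℂ) ∈ spectrum ℂ (adjMat (cayleyGraph S)) := by
  rw [← AlgEquiv.spectrum_eq (Matrix.toLinAlgEquiv (Pi.basisFun ℂ (DihedralGroup 7))),
    ← Module.End.hasEigenvalue_iff_mem_spectrum]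
  apply Module.End.hasEigenvalue_of_hasEigenvector (x := evec)
  constructor
  · rw [Module.End.mem_eigenspace_iff]
    show Matrix.toLin' (adjMat (cayleyGraph S)) evec = _
    rw [Matrix.toLin'_apply, evec_mul S hS]
  · intro h0
    have := congrFun h0 (DihedralGroup.r 0)
    rw [evec] at this
    simp only [wf, Pi.zero_apply] at this
    rw [show ((0 : ZMod 7)).val = 0 by decide, pow_zero, mul_one] at this
    have h2 : Real.sqrt 2 ≠ 0 := by positivity
    exact h2 (by exact_mod_cast this)

lemma not_integral (S : Set (DihedralGroup 7))
    (hS : S = {DihedralGroup.sr 1, DihedralGroup.sr 2, DihedralGroup.sr 4}) :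
    ¬ IsIntegralGraph (cayleyGraph S) := by
  intro h
  obtain ⟨z, hz⟩ := h _ (sqrt2_mem S hS)
  have : Real.sqrt 2 = (z : ℝ) := by exact_mod_cast hz
  exact irrational_sqrt_two.ne_int z this

/-- A decidable copy of the Cayley graph. -/
def G0 : SimpleGraph (DihedralGroup 7) :=
  SimpleGraph.fromRel (fun x y => x⁻¹ * y = .sr 1 ∨ x⁻¹ * y = .sr 2 ∨ x⁻¹ * y = .sr 4)

instance : DecidableRel G0.Adj := fun x y =>
  decidable_of_iff _ (SimpleGraph.fromRel_adj _ x y).symm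

lemma sqMult_eq (x : DihedralGroup 7) :
    sqMult {DihedralGroup.sr 1, DihedralGroup.sr 2, DihedralGroup.sr 4} x
      = (Finset.univ.filter (fun p : DihedralGroup 7 × DihedralGroup 7 =>
          (p.1 = .sr 1 ∨ p.1 = .sr 2 ∨ p.1 = .sr 4) ∧
          (p.2 = .sr 1 ∨ p.2 = .sr 2 ∨ p.2 = .sr 4) ∧ p.1 * p.2 = x)).card := by
  rw [sqMult]
  simp only [Set.mem_insert_iff, Set.mem_singleton_iff]
  rw [Nat.card_eq_fintype_card, Fintype.card_subtype]

/-- Example 3.9. In `D_7` with `S = {ba, ba², ba⁴}`, the Cayley graph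
`X(D_7,S)` is connected but not integral, even though the multiset `S² = 3*{1} ∪ [a]`
has multiplicity function constant on each atom of `⟨a⟩` (namely multiplicity `3` at `1`
and `1` at each nonidentity power of `a`). -/
theorem stmt16 (S : Set (DihedralGroup 7))
    (hS : S = {DihedralGroup.sr 1, DihedralGroup.sr 2, DihedralGroup.sr 4}) :
    (cayleyGraph S).Connected ∧ ¬ IsIntegralGraph (cayleyGraph S) ∧
      sqMult S (DihedralGroup.r 0) = 3 ∧
      (∀ k : ZMod 7, k ≠ 0 → sqMult S (DihedralGroup.r k) = 1) := by
  refine ⟨?_, not_integral S hS, ?_, ?_⟩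
  · have h : cayleyGraph S = G0 := by
      subst hS
      ext x y
      simp [cayleyGraph, G0, Set.mem_insert_iff]
    rw [h, SimpleGraph.connected_iff]
    exact ⟨by decide, ⟨DihedralGroup.r 0⟩⟩
  · subst hS
    rw [sqMult_eq]
    decide
  · subst hS
    have h : ∀ k : ZMod 7, k ≠ 0 →
        (Finset.univ.filter (fun p : DihedralGroup 7 × DihedralGroup 7 =>
          (p.1 = .sr 1 ∨ p.1 = .sr 2 ∨ p.1 = .sr 4) ∧
          (p.2 = .sr 1 ∨ p.2 = .sr 2 ∨ p.2 = .sr 4) ∧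
          p.1 * p.2 = DihedralGroup.r k)).card = 1 := by decide
    intro k hk
    rw [sqMult_eq]
    exact h k hk
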